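/- (Recursive distance inequality) Let d_τ := d_v(P_T^{(τ)} − π) denote the total variation distance of the herded Gibbs empirical distribution at sweep τ from the target π. Under the hypotheses of the main theorem (fully connected graph, fixed scan, Dobrushin coefficient η < 1 of the Gibbs sweep kernel), for all T ≥ T* and τ ≥ 0: d_{τ+1} ≤ 2N/(lT) + η · d_τ. -/

import Mathlib

open Finset

/-- Joint states of `N` binary variables. -/
abbrev GState (N : ℕ) := Fin N → Bool

/-- Full conditional probability π(Xᵢ = b | x₋ᵢ) for a target distribution π. -/
noncomputable def condProb {N : ℕ} (π : GState N → ℝ) (i : Fin N) (x : GState N)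
    (b : Bool) : ℝ :=
  π (Function.update x i b) / (π (Function.update x i true) + π (Function.update x i false))

/-- Variable updated at step `t ≥ 1` of a fixed systematic scan (step kN + i with
1 ≤ i ≤ N updates the i-th variable, i.e. index i − 1). -/
def scanVar (N : ℕ) (hN : 0 < N) (t : ℕ) : Fin N := ⟨(t - 1) % N, Nat.mod_lt _ hN⟩

/-- A herded Gibbs trajectory on a fully connected graph of `N` binary variables with
target `π`: one weight per variable `i` and per assignment of all the other variables
(weights are indexed by full states but only the off-`i` coordinates matter); at step
`t+1` the scanned variable emits 𝟙[w > 0] and only its active weight is updated. -/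
structure HerdedGibbs (N : ℕ) (hN : 0 < N) (π : GState N → ℝ) where
  X : ℕ → GState N
  W : ℕ → Fin N → GState N → ℝ
  init_support : 0 < π (X 0)
  init_w : ∀ i x, condProb π i x true - 1 < W 0 i x ∧ W 0 i x ≤ condProb π i x true
  step_other : ∀ t j, j ≠ scanVar N hN (t + 1) → X (t + 1) j = X t j
  step_cur : ∀ t, X (t + 1) (scanVar N hN (t + 1))
      = decide (0 < W t (scanVar N hN (t + 1)) (X t))
  w_active : ∀ t x, (∀ j, j ≠ scanVar N hN (t + 1) → x j = X t j) →
      W (t + 1) (scanVar N hN (t + 1)) x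
        = W t (scanVar N hN (t + 1)) x + condProb π (scanVar N hN (t + 1)) x true
          - (if X (t + 1) (scanVar N hN (t + 1)) = true then 1 else 0)
  w_frozen : ∀ t i x, ¬(i = scanVar N hN (t + 1) ∧ ∀ j, j ≠ i → x j = X t j) →
      W (t + 1) i x = W t i x

/-- Transition matrix 𝒯ᵢ of regular Gibbs updating variable `i`. -/
noncomputable def stepKernel {N : ℕ} (π : GState N → ℝ) (i : Fin N) :
    Matrix (GState N) (GState N) ℝ :=
  fun x y => if ∀ j, j ≠ i → x j = y j then condProb π i x (y i) else 0

/-- Full-sweep Gibbs transition kernel 𝒯 = 𝒯₁𝒯₂⋯𝒯_N. -/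
noncomputable def sweepKernel {N : ℕ} (π : GState N → ℝ) :
    Matrix (GState N) (GState N) ℝ :=
  (List.ofFn fun i : Fin N => stepKernel π i).prod

/-- Total variation distance d_v(μ − ν) = ‖μ − ν‖₁ / 2 on a finite state space. -/
noncomputable def tvDist {α : Type*} [Fintype α] (μ ν : α → ℝ) : ℝ :=
  (∑ x, |μ x - ν x|) / 2

/-- Dobrushin ergodic coefficient of a transition matrix. -/
noncomputable def dobrushin {α : Type*} [Fintype α] (K : Matrix α α ℝ) : ℝ :=
  ⨆ x, ⨆ x', tvDist (K x) (K x')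

/-- Empirical distribution of `T` end-of-sweep samples starting at sweep `τ`. -/
noncomputable def empDist {N : ℕ} (X : ℕ → GState N) (τ T : ℕ) : GState N → ℝ :=
  fun x => (((Finset.Ico τ (τ + T)).filter fun k => X (k * N) = x).card : ℝ) / T

/-- N_num: number of occurrences of the joint state (x₋ᵢ, b) at substep `i` of sweeps
τ, …, τ+T−1. -/
def empNum {N : ℕ} (hN : 0 < N) (X : ℕ → GState N) (τ T i : ℕ) (x : GState N)
    (b : Bool) : ℕ :=
  ((Finset.Ico τ (τ + T)).filter fun k =>
    (∀ j, j ≠ scanVar N hN i → X (k * N + i) j = x j)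
      ∧ X (k * N + i) (scanVar N hN i) = b).card

/-- N_den: number of occurrences of the conditioning state x₋ᵢ at substep `i − 1`. -/
def empDen {N : ℕ} (hN : 0 < N) (X : ℕ → GState N) (τ T i : ℕ) (x : GState N) : ℕ :=
  ((Finset.Ico τ (τ + T)).filter fun k =>
    ∀ j, j ≠ scanVar N hN i → X (k * N + i - 1) j = x j).card

/-- Empirical herded Gibbs single-step transition kernel T̃⁽ᵗ⁾_{T,i}; entries with an
unvisited conditioning state are set to the regular Gibbs kernel. -/
noncomputable def empStepKernel {N : ℕ} (hN : 0 < N) (π : GState N → ℝ)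
    (X : ℕ → GState N) (τ T i : ℕ) : Matrix (GState N) (GState N) ℝ :=
  fun x y => if ∀ j, j ≠ scanVar N hN i → x j = y j then
      (if empDen hN X τ T i x = 0 then condProb π (scanVar N hN i) x (y (scanVar N hN i))
       else (empNum hN X τ T i x (y (scanVar N hN i)) : ℝ) / (empDen hN X τ T i x : ℝ))
    else 0

/-- Empirical full-sweep herded Gibbs kernel T̃⁽ᵗ⁾_T = T̃⁽ᵗ⁾_{T,1}⋯T̃⁽ᵗ⁾_{T,N}. -/
noncomputable def empSweepKernel {N : ℕ} (hN : 0 < N) (π : GState N → ℝ)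
    (X : ℕ → GState N) (τ T : ℕ) : Matrix (GState N) (GState N) ℝ :=
  (List.ofFn fun i : Fin N => empStepKernel hN π X τ T (i + 1)).prod

section TV
variable {α : Type*} [Fintype α]

lemma tvDist_nonneg (μ ν : α → ℝ) : 0 ≤ tvDist μ ν := by
  unfold tvDist
  positivity

lemma tvDist_self (μ : α → ℝ) : tvDist μ μ = 0 := by
  simp [tvDist]

lemma tvDist_triangle (μ ν ρ : α → ℝ) : tvDist μ ρ ≤ tvDist μ ν + tvDist ν ρ := by
  unfold tvDist
  rw [← add_div, div_le_div_iff_of_pos_right (by norm_num)]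
  rw [← Finset.sum_add_distrib]
  apply Finset.sum_le_sum
  intro x _
  have : μ x - ρ x = (μ x - ν x) + (ν x - ρ x) := by ring
  rw [this]
  exact abs_add_le _ _

/-- Substochastic contraction. -/
lemma tvDist_vecMul_le (K : Matrix α α ℝ) (hK0 : ∀ x y, 0 ≤ K x y)
    (hK1 : ∀ x, ∑ y, K x y ≤ 1) (μ ν : α → ℝ) :
    tvDist (Matrix.vecMul μ K) (Matrix.vecMul ν K) ≤ tvDist μ ν := by
  unfold tvDist
  apply div_le_div_of_nonneg_right ?_ (by norm_num)
  · calc ∑ y, |Matrix.vecMul μ K y - Matrix.vecMul ν K y|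
        = ∑ y, |∑ x, (μ x - ν x) * K x y| := by
          congr 1; ext y
          simp [Matrix.vecMul, dotProduct, sub_mul, Finset.sum_sub_distrib]
      _ ≤ ∑ y, ∑ x, |(μ x - ν x) * K x y| := by
          exact Finset.sum_le_sum fun y _ => Finset.abs_sum_le_sum_abs _ _
      _ = ∑ x, |μ x - ν x| * ∑ y, K x y := by
          rw [Finset.sum_comm]
          congr 1; ext x
          rw [Finset.mul_sum]
          congr 1; ext y
          rw [abs_mul, abs_of_nonneg (hK0 x y)]
      _ ≤ ∑ x, |μ x - ν x| * 1 := by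
          exact Finset.sum_le_sum fun x _ => by
            exact mul_le_mul_of_nonneg_left (hK1 x) (abs_nonneg _)
      _ = ∑ x, |μ x - ν x| := by simp

end TV

section TV2
variable {α : Type*} [Fintype α]

lemma tvDist_le_dobrushin (K : Matrix α α ℝ) (x x' : α) :
    tvDist (K x) (K x') ≤ dobrushin K := by
  have h1 : tvDist (K x) (K x') ≤ ⨆ x'', tvDist (K x) (K x'') :=
    le_ciSup (f := fun x'' => tvDist (K x) (K x''))
      (Set.Finite.bddAbove (Set.finite_range _)) x'
  exact h1.trans (le_ciSup (f := fun x => ⨆ x'', tvDist (K x) (K x''))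
      (Set.Finite.bddAbove (Set.finite_range _)) x)

/-- Dobrushin contraction for differences of nonnegative vectors with equal mass. -/
lemma tvDist_vecMul_le_dobrushin (K : Matrix α α ℝ) (μ ν : α → ℝ)
    (hsum : ∑ x, μ x = ∑ x, ν x) :
    tvDist (Matrix.vecMul μ K) (Matrix.vecMul ν K) ≤ dobrushin K * tvDist μ ν := by
  classical
  set f : α → ℝ := fun x => μ x - ν x with hf
  set fp : α → ℝ := fun x => max (f x) 0 with hfp
  set fm : α → ℝ := fun x => max (-f x) 0 with hfm
  have hfpm : ∀ x, f x = fp x - fm x := by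
    intro x; simp only [hfp, hfm]; rcases le_total (f x) 0 with h | h
    · rw [max_eq_right h, max_eq_left (by linarith)]; ring
    · rw [max_eq_left h, max_eq_right (by linarith)]; ring
  have habs : ∀ x, |f x| = fp x + fm x := by
    intro x; simp only [hfp, hfm]; rcases le_total (f x) 0 with h | h
    · rw [max_eq_right h, max_eq_left (by linarith), abs_of_nonpos h]; ring
    · rw [max_eq_left h, max_eq_right (by linarith), abs_of_nonneg h]; ring
  have hfp0 : ∀ x, 0 ≤ fp x := fun x => le_max_right _ _
  have hfm0 : ∀ x, 0 ≤ fm x := fun x => le_max_right _ _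
  have hsumf : ∑ x, f x = 0 := by simp [hf, Finset.sum_sub_distrib, hsum]
  have hceq : ∑ x, fm x = ∑ x, fp x := by
    have h4 : ∑ x, (fp x - fm x) = 0 := by
      rw [← hsumf]; exact Finset.sum_congr rfl fun x _ => (hfpm x).symm
    rw [Finset.sum_sub_distrib] at h4
    linarith
  have htv : tvDist μ ν = ∑ x, fp x := by
    have h5 : ∑ x, |μ x - ν x| = ∑ x, (fp x + fm x) :=
      Finset.sum_congr rfl fun x _ => habs x
    rw [tvDist, h5, Finset.sum_add_distrib, hceq]
    ring
  rcases eq_or_lt_of_le (Finset.sum_nonneg fun x _ => hfp0 x) with hc0 | hcpos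
  · -- mass zero : μ = ν
    have hfz : ∀ x, f x = 0 := by
      intro x
      have h1 : fp x = 0 :=
        (Finset.sum_eq_zero_iff_of_nonneg (fun x _ => hfp0 x)).mp hc0.symm x
          (Finset.mem_univ x)
      have h2 : fm x = 0 := by
        have h3 : ∑ x, fm x = 0 := by rw [hceq, ← hc0]
        exact (Finset.sum_eq_zero_iff_of_nonneg (fun x _ => hfm0 x)).mp h3 x
          (Finset.mem_univ x)
      rw [hfpm, h1, h2]; ring
    have hμν : μ = ν := by ext x; have := hfz x; simp only [hf] at this; linarith
    rw [hμν]
    have : tvDist (Matrix.vecMul ν K) (Matrix.vecMul ν K) = 0 := by simp [tvDist]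
    rw [this]
    have : tvDist ν ν = 0 := by simp [tvDist]
    rw [this, mul_zero]
  · -- main case
    set c : ℝ := ∑ x, fp x with hc
    have hcpos' : 0 < c := hcpos
    rw [htv]
    have key : ∀ y, Matrix.vecMul μ K y - Matrix.vecMul ν K y
        = (1/c) * ∑ x, ∑ x', fp x * fm x' * (K x y - K x' y) := by
      intro y
      have h1 : Matrix.vecMul μ K y - Matrix.vecMul ν K y = ∑ x, f x * K x y := by
        simp [Matrix.vecMul, dotProduct, hf, sub_mul, Finset.sum_sub_distrib]
      rw [h1]
      have h2 : ∑ x, ∑ x', fp x * fm x' * (K x y - K x' y)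
          = (∑ x, fp x * K x y) * (∑ x', fm x')
            - (∑ x, fp x) * (∑ x', fm x' * K x' y) := by
        have hin : ∀ x, ∑ x', fp x * fm x' * (K x y - K x' y)
            = (fp x * K x y) * (∑ x', fm x') - fp x * (∑ x', fm x' * K x' y) := by
          intro x
          have e : ∀ x', fp x * fm x' * (K x y - K x' y)
              = (fp x * K x y) * fm x' - fp x * (fm x' * K x' y) := fun x' => by ring
          rw [Finset.sum_congr rfl fun x' _ => e x', Finset.sum_sub_distrib,
            ← Finset.mul_sum, ← Finset.mul_sum]
        rw [Finset.sum_congr rfl fun x _ => hin x, Finset.sum_sub_distrib,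
          ← Finset.sum_mul, ← Finset.sum_mul]
      rw [h2, hceq, ← hc]
      have h3 : ∑ x, f x * K x y = ∑ x, (fp x * K x y - fm x * K x y) :=
        Finset.sum_congr rfl fun x _ => by rw [hfpm]; ring
      rw [h3, Finset.sum_sub_distrib]
      field_simp
    unfold tvDist
    rw [div_le_iff₀ (by norm_num : (0:ℝ) < 2)]
    calc ∑ y, |Matrix.vecMul μ K y - Matrix.vecMul ν K y|
        = ∑ y, (1/c) * |∑ x, ∑ x', fp x * fm x' * (K x y - K x' y)| := by
          refine Finset.sum_congr rfl fun y _ => ?_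
          rw [key y, abs_mul, abs_of_nonneg (by positivity)]
      _ ≤ ∑ y, (1/c) * ∑ x, ∑ x', fp x * fm x' * |K x y - K x' y| := by
          apply Finset.sum_le_sum; intro y _
          apply mul_le_mul_of_nonneg_left ?_ (by positivity)
          calc |∑ x, ∑ x', fp x * fm x' * (K x y - K x' y)|
              ≤ ∑ x, |∑ x', fp x * fm x' * (K x y - K x' y)| :=
                Finset.abs_sum_le_sum_abs _ _
            _ ≤ ∑ x, ∑ x', |fp x * fm x' * (K x y - K x' y)| :=
                Finset.sum_le_sum fun x _ => Finset.abs_sum_le_sum_abs _ _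
            _ = ∑ x, ∑ x', fp x * fm x' * |K x y - K x' y| := by
                refine Finset.sum_congr rfl fun x _ => ?_
                refine Finset.sum_congr rfl fun x' _ => ?_
                rw [abs_mul, abs_mul, abs_of_nonneg (hfp0 x), abs_of_nonneg (hfm0 x')]
      _ = (1/c) * ∑ x, ∑ x', fp x * fm x' * ∑ y, |K x y - K x' y| := by
          rw [← Finset.mul_sum]
          congr 1
          rw [Finset.sum_comm]
          refine Finset.sum_congr rfl fun x _ => ?_
          rw [Finset.sum_comm]
          refine Finset.sum_congr rfl fun x' _ => ?_
          rw [Finset.mul_sum]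
      _ ≤ (1/c) * ∑ x, ∑ x', fp x * fm x' * (2 * dobrushin K) := by
          apply mul_le_mul_of_nonneg_left ?_ (by positivity)
          apply Finset.sum_le_sum; intro x _
          apply Finset.sum_le_sum; intro x' _
          refine mul_le_mul_of_nonneg_left ?_ (mul_nonneg (hfp0 x) (hfm0 x'))
          have := tvDist_le_dobrushin K x x'
          unfold tvDist at this
          linarith
      _ = dobrushin K * c * 2 := by
          have h6 : ∑ x, ∑ x', fp x * fm x' * (2 * dobrushin K)
              = (∑ x, fp x) * (∑ x', fm x') * (2 * dobrushin K) := by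
            rw [Finset.sum_mul_sum, Finset.sum_mul]
            refine Finset.sum_congr rfl fun x _ => ?_
            rw [Finset.sum_mul]
          rw [h6, hceq, ← hc]
          field_simp

end TV2
section Weights

variable {N : ℕ} {hN : 0 < N} {π : GState N → ℝ}

lemma update_eq_of_agree {i : Fin N} {x x' : GState N}
    (h : ∀ j, j ≠ i → x j = x' j) (b : Bool) :
    Function.update x i b = Function.update x' i b := by
  funext j
  rcases eq_or_ne j i with rfl | hj
  · simp
  · rw [Function.update_of_ne hj, Function.update_of_ne hj, h j hj]

lemma condProb_congr {i : Fin N} {x x' : GState N}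
    (h : ∀ j, j ≠ i → x j = x' j) (b : Bool) :
    condProb π i x b = condProb π i x' b := by
  unfold condProb
  rw [update_eq_of_agree h b, update_eq_of_agree h true, update_eq_of_agree h false]

lemma condProb_nonneg (hπ0 : ∀ x, 0 ≤ π x) (i : Fin N) (x : GState N) (b : Bool) :
    0 ≤ condProb π i x b :=
  div_nonneg (hπ0 _) (add_nonneg (hπ0 _) (hπ0 _))

lemma condProb_le_one (hπ0 : ∀ x, 0 ≤ π x) (i : Fin N) (x : GState N) (b : Bool) :
    condProb π i x b ≤ 1 := by
  apply div_le_one_of_le₀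
  · cases b
    · exact le_add_of_nonneg_left (hπ0 _)
    · exact le_add_of_nonneg_right (hπ0 _)
  · exact add_nonneg (hπ0 _) (hπ0 _)

lemma eq_update_self {i : Fin N} (x : GState N) : Function.update x i (x i) = x :=
  Function.update_eq_self i x

/-- A state agreeing with `x` off `i` is `x` or its flip at `i`. -/
lemma mem_class {i : Fin N} {x z : GState N} (h : ∀ j, j ≠ i → z j = x j) :
    z = Function.update x i (x i) ∨ z = Function.update x i (!x i) := by
  rcases Bool.eq_or_eq_not (z i) (x i) with hb | hb
  · left
    funext j
    rcases eq_or_ne j i with rfl | hj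
    · simpa using hb
    · rw [Function.update_of_ne hj]; exact h j hj
  · right
    funext j
    rcases eq_or_ne j i with rfl | hj
    · simpa using hb
    · rw [Function.update_of_ne hj]; exact h j hj

/-- Difference of weights of two states in the same class is constant in time. -/
lemma weight_diff_const (hg : HerdedGibbs N hN π) (i : Fin N) (x x' : GState N)
    (h : ∀ j, j ≠ i → x j = x' j) :
    ∀ t, hg.W t i x - hg.W t i x' = hg.W 0 i x - hg.W 0 i x' := by
  intro t
  induction t with
  | zero => rfl
  | succ t ih =>
    by_cases hact : i = scanVar N hN (t + 1) ∧ ∀ j, j ≠ i → x j = hg.X t j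
    · obtain ⟨hi, hx⟩ := hact
      subst hi
      have hx' : ∀ j, j ≠ scanVar N hN (t+1) → x' j = hg.X t j := fun j hj =>
        (h j hj).symm.trans (hx j hj)
      rw [hg.w_active t x hx, hg.w_active t x' hx',
        condProb_congr (π := π) h true]
      linarith [ih]
    · have hact' : ¬(i = scanVar N hN (t + 1) ∧ ∀ j, j ≠ i → x' j = hg.X t j) := by
        rintro ⟨hi, hx'⟩
        exact hact ⟨hi, fun j hj => (h j hj).trans (hx' j hj)⟩
      rw [hg.w_frozen t i x hact, hg.w_frozen t i x' hact']
      exact ih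

/-- Degenerate-conditional weight invariants. -/
lemma weight_inv01 (hg : HerdedGibbs N hN π) :
    ∀ t, (∀ i x, condProb π i x true = 1 → 0 < hg.W t i x)
      ∧ (∀ i x, condProb π i x true = 0 → hg.W t i x ≤ 0) := by
  intro t
  induction t with
  | zero =>
    constructor
    · intro i x h1
      have := (hg.init_w i x).1
      rw [h1] at this; linarith
    · intro i x h0
      have := (hg.init_w i x).2
      rw [h0] at this; linarith
  | succ t ih =>
    have main : ∀ i x, (condProb π i x true = 1 → 0 < hg.W (t+1) i x)
        ∧ (condProb π i x true = 0 → hg.W (t+1) i x ≤ 0) := by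
      intro i x
      by_cases hact : i = scanVar N hN (t + 1) ∧ ∀ j, j ≠ i → x j = hg.X t j
      · obtain ⟨hi, hx⟩ := hact
        subst hi
        have hXcls : ∀ j, j ≠ scanVar N hN (t+1) → hg.X t j = x j := fun j hj =>
          (hx j hj).symm
        have hcp : condProb π (scanVar N hN (t+1)) (hg.X t) true
            = condProb π (scanVar N hN (t+1)) x true := condProb_congr hXcls true
        constructor
        · intro h1
          have hy : 0 < hg.W t (scanVar N hN (t+1)) (hg.X t) :=
            ih.1 _ _ (hcp.trans h1)
          have hcur := hg.step_cur t
          rw [decide_eq_true hy] at hcur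
          rw [hg.w_active t x hx, h1, hcur]
          have := ih.1 _ x h1
          norm_num
          exact this
        · intro h0
          have hy : hg.W t (scanVar N hN (t+1)) (hg.X t) ≤ 0 :=
            ih.2 _ _ (hcp.trans h0)
          have hcur := hg.step_cur t
          have hdec : decide (0 < hg.W t (scanVar N hN (t+1)) (hg.X t)) = false := by
            simp [not_lt.mpr hy]
          rw [hdec] at hcur
          rw [hg.w_active t x hx, h0, hcur]
          have := ih.2 _ x h0
          norm_num
          exact this
      · rw [hg.w_frozen t i x hact]
        exact ⟨ih.1 i x, ih.2 i x⟩
    exact ⟨fun i x => (main i x).1, fun i x => (main i x).2⟩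

/-- General weight bounds in terms of the initial in-class spread. -/
lemma weight_bounds (hg : HerdedGibbs N hN π) (hπ0 : ∀ x, 0 ≤ π x) :
    ∀ t i x,
      condProb π i x true - 1
          + min (hg.W 0 i x - hg.W 0 i (Function.update x i (!x i))) 0
        < hg.W t i x
      ∧ hg.W t i x ≤ condProb π i x true
          + max (hg.W 0 i x - hg.W 0 i (Function.update x i (!x i))) 0 := by
  intro t
  induction t with
  | zero =>
    intro i x
    have h := hg.init_w i x
    constructor
    · have : min (hg.W 0 i x - hg.W 0 i (Function.update x i (!x i))) 0 ≤ 0 :=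
        min_le_right _ _
      linarith [h.1]
    · have : (0:ℝ) ≤ max (hg.W 0 i x - hg.W 0 i (Function.update x i (!x i))) 0 :=
        le_max_right _ _
      linarith [h.2]
  | succ t ih =>
    intro i x
    by_cases hact : i = scanVar N hN (t + 1) ∧ ∀ j, j ≠ i → x j = hg.X t j
    · obtain ⟨hi, hx⟩ := hact
      subst hi
      set i := scanVar N hN (t+1)
      set w := hg.W t i x with hw
      set y := hg.W t i (hg.X t) with hy
      set c := hg.W 0 i x - hg.W 0 i (Function.update x i (!x i)) with hc
      set p := condProb π i x true with hp
      have hp0 : 0 ≤ p := condProb_nonneg hπ0 i x true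
      have hp1 : p ≤ 1 := condProb_le_one hπ0 i x true
      -- e := w - y lies between min c 0 and max c 0
      have hXcls : ∀ j, j ≠ i → hg.X t j = x j := fun j hj => (hx j hj).symm
      have he : min c 0 ≤ w - y ∧ w - y ≤ max c 0 := by
        rcases mem_class hXcls with hX | hX
        · rw [eq_update_self] at hX
          rw [hw, hy, hX, sub_self]
          exact ⟨min_le_right _ _, le_max_right _ _⟩
        · have := weight_diff_const hg i x (Function.update x i (!x i))
            (fun j hj => (Function.update_of_ne hj _ _).symm) t
          rw [hw, hy, hX, this, ← hc]
          exact ⟨min_le_left _ _, le_max_left _ _⟩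
      have hcur := hg.step_cur t
      have hupd := hg.w_active t x hx
      rw [← hp] at hupd
      have ihx := ih i x
      rw [← hw, ← hc, ← hp] at ihx
      by_cases h0 : 0 < y
      · rw [hy] at h0
        rw [decide_eq_true h0] at hcur
        rw [hcur] at hupd
        norm_num at hupd
        rw [hupd, ← hw]
        rw [← hy] at h0
        constructor
        · have : min c 0 ≤ w - y := he.1
          linarith
        · linarith [ihx.2]
      · rw [hy] at h0
        have hdec : decide (0 < hg.W t i (hg.X t)) = false := by
          simp [h0]
        rw [hdec] at hcur
        rw [hcur] at hupd
        norm_num at hupd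
        rw [hupd, ← hw]
        rw [← hy, not_lt] at h0
        constructor
        · linarith [ihx.1]
        · have : w - y ≤ max c 0 := he.2
          linarith
    · rw [hg.w_frozen t i x hact]
      exact ih i x

/-- The trajectory stays inside the support of π. -/
lemma traj_pos (hg : HerdedGibbs N hN π) (hπ0 : ∀ x, 0 ≤ π x) :
    ∀ t, 0 < π (hg.X t) := by
  intro t
  induction t with
  | zero => exact hg.init_support
  | succ t ih =>
    set i := scanVar N hN (t+1) with hi
    have hX1 : hg.X (t+1) = Function.update (hg.X t) i
        (decide (0 < hg.W t i (hg.X t))) := by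
      funext j
      rcases eq_or_ne j i with rfl | hj
      · rw [hg.step_cur t]; simp [hi]
      · rw [Function.update_of_ne hj, hg.step_other t j hj]
    have hD : 0 < π (Function.update (hg.X t) i true)
        + π (Function.update (hg.X t) i false) := by
      rcases Bool.eq_false_or_eq_true (hg.X t i) with hb | hb
      · have h7 : Function.update (hg.X t) i true = hg.X t := by
          rw [← hb]; exact eq_update_self _
        rw [h7]
        have := hπ0 (Function.update (hg.X t) i false)
        linarith
      · have h7 : Function.update (hg.X t) i false = hg.X t := by
          rw [← hb]; exact eq_update_self _
        rw [h7]
        have := hπ0 (Function.update (hg.X t) i true)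
        linarith
    by_cases h0 : 0 < hg.W t i (hg.X t)
    · rw [hX1, decide_eq_true h0]
      by_contra hle
      have hz : π (Function.update (hg.X t) i true) = 0 :=
        le_antisymm (not_lt.mp hle) (hπ0 _)
      have hcp : condProb π i (hg.X t) true = 0 := by
        unfold condProb; rw [hz, zero_div]
      exact absurd h0 (not_lt.mpr ((weight_inv01 hg t).2 i (hg.X t) hcp))
    · have hdec : decide (0 < hg.W t i (hg.X t)) = false := by simp [h0]
      rw [hX1, hdec]
      by_contra hle
      have hz : π (Function.update (hg.X t) i false) = 0 :=
        le_antisymm (not_lt.mp hle) (hπ0 _)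
      have hcp : condProb π i (hg.X t) true = 1 := by
        unfold condProb
        rw [hz, add_zero, div_self]
        rw [hz, add_zero] at hD
        exact hD.ne'
      exact absurd ((weight_inv01 hg t).1 i (hg.X t) hcp) h0
end Weights
section Counts

variable {N : ℕ} {hN : 0 < N} {π : GState N → ℝ}

lemma scanVar_eq {m : ℕ} (hm : m < N) (k : ℕ) :
    scanVar N hN (k * N + m + 1) = ⟨m, hm⟩ := by
  unfold scanVar
  apply Fin.ext
  simp only [Nat.add_sub_cancel]
  rw [Nat.add_comm (k * N) m, Nat.add_mul_mod_self_right, Nat.mod_eq_of_lt hm]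

lemma scanVar_eq' {m : ℕ} (hm : m < N) :
    scanVar N hN (m + 1) = ⟨m, hm⟩ := by
  unfold scanVar
  apply Fin.ext
  simp only [Nat.add_sub_cancel]
  exact Nat.mod_eq_of_lt hm

lemma scanVar_mid {m : ℕ} (hm : m < N) (k r : ℕ) (hr1 : 1 ≤ r) (hr2 : r ≤ N - 1) :
    scanVar N hN (k * N + m + 1 + r) ≠ ⟨m, hm⟩ := by
  intro h
  have hv : (k * N + m + 1 + r - 1) % N = m := congrArg Fin.val h
  have h2 : (m + r) % N = m % N := by
    have e : k * N + m + 1 + r - 1 = m + r + k * N := by omega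
    rw [e, Nat.add_mul_mod_self_right] at hv
    rw [hv, Nat.mod_eq_of_lt hm]
  have h3 : N ∣ (m + r) - m := (Nat.modEq_iff_dvd' (Nat.le_add_right m r)).mp h2.symm
  have h4 : N ∣ r := by simpa using h3
  have := Nat.le_of_dvd (by omega) h4
  omega

lemma weight_sweep_step (hg : HerdedGibbs N hN π) {m : ℕ} (hm : m < N) (k : ℕ)
    (y : GState N) :
    hg.W ((k + 1) * N + m) ⟨m, hm⟩ y = hg.W (k * N + m + 1) ⟨m, hm⟩ y := by
  have key : ∀ r, r ≤ N - 1 →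
      hg.W (k * N + m + 1 + r) ⟨m, hm⟩ y = hg.W (k * N + m + 1) ⟨m, hm⟩ y := by
    intro r
    induction r with
    | zero => intro _; rfl
    | succ r ih =>
      intro hr
      have hfr : hg.W (k * N + m + 1 + r + 1) ⟨m, hm⟩ y
          = hg.W (k * N + m + 1 + r) ⟨m, hm⟩ y := by
        apply hg.w_frozen
        rintro ⟨hi, -⟩
        have : k * N + m + 1 + r + 1 = k * N + m + 1 + (r + 1) := by omega
        rw [this] at hi
        exact scanVar_mid hm k (r + 1) (by omega) hr hi.symm
      have e : k * N + m + 1 + (r + 1) = k * N + m + 1 + r + 1 := by omega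
      rw [e, hfr, ih (by omega)]
  have e : (k + 1) * N + m = k * N + m + 1 + (N - 1) := by
    rw [add_mul, one_mul]; omega
  rw [e, key (N - 1) le_rfl]

lemma weight_substep (hg : HerdedGibbs N hN π) {m : ℕ} (hm : m < N) (k : ℕ)
    (y : GState N) :
    hg.W (k * N + m + 1) ⟨m, hm⟩ y
      = hg.W (k * N + m) ⟨m, hm⟩ y
        + (if (∀ j, j ≠ (⟨m, hm⟩ : Fin N) → hg.X (k * N + m) j = y j) then
            condProb π ⟨m, hm⟩ y true
              - (if hg.X (k * N + m + 1) ⟨m, hm⟩ = true then (1:ℝ) else 0)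
          else 0) := by
  by_cases hcls : ∀ j, j ≠ (⟨m, hm⟩ : Fin N) → hg.X (k * N + m) j = y j
  · rw [if_pos hcls]
    have hcond : ∀ j, j ≠ scanVar N hN (k * N + m + 1) → y j = hg.X (k * N + m) j := by
      rw [scanVar_eq hm]
      exact fun j hj => (hcls j hj).symm
    have hupd := hg.w_active (k * N + m) y hcond
    rw [scanVar_eq hm] at hupd
    rw [hupd]
    ring
  · rw [if_neg hcls, add_zero]
    apply hg.w_frozen
    rintro ⟨-, hcl⟩
    exact hcls fun j hj => (hcl j hj).symm

lemma weight_telescope (hg : HerdedGibbs N hN π) {m : ℕ} (hm : m < N)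
    (y : GState N) (τ : ℕ) :
    ∀ T : ℕ, hg.W ((τ + T) * N + m) ⟨m, hm⟩ y - hg.W (τ * N + m) ⟨m, hm⟩ y
      = ∑ k ∈ Finset.Ico τ (τ + T),
          (if (∀ j, j ≠ (⟨m, hm⟩ : Fin N) → hg.X (k * N + m) j = y j) then
            condProb π ⟨m, hm⟩ y true
              - (if hg.X (k * N + m + 1) ⟨m, hm⟩ = true then (1:ℝ) else 0)
          else 0) := by
  intro T
  induction T with
  | zero => simp
  | succ T ih =>
    have e1 : τ + (T + 1) = (τ + T) + 1 := by omega
    rw [e1, Finset.sum_Ico_succ_top (by omega : τ ≤ τ + T)]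
    rw [weight_sweep_step hg hm (τ + T) y, weight_substep hg hm (τ + T) y]
    rw [← ih]
    ring

/-- The class condition propagates across the substep. -/
lemma class_iff (hg : HerdedGibbs N hN π) {m : ℕ} (hm : m < N) (k : ℕ)
    (y : GState N) :
    (∀ j, j ≠ (⟨m, hm⟩ : Fin N) → hg.X (k * N + m) j = y j)
      ↔ (∀ j, j ≠ (⟨m, hm⟩ : Fin N) → hg.X (k * N + m + 1) j = y j) := by
  have hstep : ∀ j, j ≠ (⟨m, hm⟩ : Fin N) → hg.X (k * N + m + 1) j = hg.X (k * N + m) j := by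
    intro j hj
    apply hg.step_other
    rw [scanVar_eq hm]
    exact hj
  constructor
  · intro h j hj; rw [hstep j hj]; exact h j hj
  · intro h j hj; rw [← hstep j hj]; exact h j hj

end Counts
section Counts2

variable {N : ℕ} {hN : 0 < N} {π : GState N → ℝ}

lemma empNum_eq_card (hg : HerdedGibbs N hN π) {m : ℕ} (hm : m < N) (τ T : ℕ)
    (y : GState N) (b : Bool) :
    empNum hN hg.X τ T (m + 1) y b
      = ((Finset.Ico τ (τ + T)).filter fun k =>
          hg.X (k * N + m + 1) = Function.update y ⟨m, hm⟩ b).card := by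
  unfold empNum
  apply congrArg
  apply Finset.filter_congr
  intro k _
  rw [scanVar_eq' (hN := hN) hm]
  constructor
  · rintro ⟨hcl, hbit⟩
    funext j
    rcases eq_or_ne j (⟨m, hm⟩ : Fin N) with rfl | hj
    · rw [Function.update_self]; exact hbit
    · rw [Function.update_of_ne hj]; exact hcl j hj
  · intro h
    constructor
    · intro j hj
      rw [show k * N + (m+1) = k * N + m + 1 from rfl, h]
      exact Function.update_of_ne hj _ _
    · rw [show k * N + (m+1) = k * N + m + 1 from rfl, h]
      exact Function.update_self _ _ _

lemma empNum_zero_of_pi_zero (hg : HerdedGibbs N hN π) (hπ0 : ∀ x, 0 ≤ π x)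
    {m : ℕ} (hm : m < N) (τ T : ℕ) (y : GState N) (b : Bool)
    (hz : π (Function.update y ⟨m, hm⟩ b) = 0) :
    empNum hN hg.X τ T (m + 1) y b = 0 := by
  rw [empNum_eq_card hg hm τ T y b, Finset.card_eq_zero, Finset.filter_eq_empty_iff]
  intro k _ h
  have hp := traj_pos hg hπ0 (k * N + m + 1)
  rw [h, hz] at hp
  exact lt_irrefl 0 hp

lemma empDen_cast (hg : HerdedGibbs N hN π) {m : ℕ} (hm : m < N) (τ T : ℕ)
    (y : GState N) :
    (empDen hN hg.X τ T (m + 1) y : ℝ)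
      = ∑ k ∈ Finset.Ico τ (τ + T),
          (if (∀ j, j ≠ (⟨m, hm⟩ : Fin N) → hg.X (k * N + m) j = y j) then (1:ℝ) else 0) := by
  unfold empDen
  rw [Finset.sum_boole]
  apply congrArg
  apply congrArg
  apply Finset.filter_congr
  intro k _
  rw [scanVar_eq' (hN := hN) hm]
  rw [show k * N + (m + 1) - 1 = k * N + m by omega]

lemma empNum_true_cast (hg : HerdedGibbs N hN π) {m : ℕ} (hm : m < N) (τ T : ℕ)
    (y : GState N) :
    (empNum hN hg.X τ T (m + 1) y true : ℝ)
      = ∑ k ∈ Finset.Ico τ (τ + T),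
          (if ((∀ j, j ≠ (⟨m, hm⟩ : Fin N) → hg.X (k * N + m) j = y j)
              ∧ hg.X (k * N + m + 1) ⟨m, hm⟩ = true) then (1:ℝ) else 0) := by
  unfold empNum
  rw [Finset.sum_boole]
  apply congrArg
  apply congrArg
  apply Finset.filter_congr
  intro k _
  rw [scanVar_eq' (hN := hN) hm]
  rw [show k * N + (m + 1) = k * N + m + 1 from rfl]
  constructor
  · rintro ⟨h1, h2⟩
    exact ⟨(class_iff hg hm k y).mpr h1, h2⟩
  · rintro ⟨h1, h2⟩
    exact ⟨(class_iff hg hm k y).mp h1, h2⟩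

/-- The discrepancy between counts and the conditional as a weight difference. -/
lemma count_telescope (hg : HerdedGibbs N hN π) {m : ℕ} (hm : m < N) (τ T : ℕ)
    (y : GState N) :
    (empDen hN hg.X τ T (m + 1) y : ℝ) * condProb π ⟨m, hm⟩ y true
        - (empNum hN hg.X τ T (m + 1) y true : ℝ)
      = hg.W ((τ + T) * N + m) ⟨m, hm⟩ y - hg.W (τ * N + m) ⟨m, hm⟩ y := by
  rw [weight_telescope hg hm y τ T, empDen_cast hg hm τ T y, empNum_true_cast hg hm τ T y]
  rw [Finset.sum_mul, ← Finset.sum_sub_distrib]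
  apply Finset.sum_congr rfl
  intro k _
  by_cases hc : ∀ j, j ≠ (⟨m, hm⟩ : Fin N) → hg.X (k * N + m) j = y j
  · rw [if_pos hc, if_pos hc, one_mul]
    by_cases hb : hg.X (k * N + m + 1) ⟨m, hm⟩ = true
    · rw [if_pos hb, if_pos ⟨hc, hb⟩]
    · rw [if_neg hb, if_neg (fun h => hb h.2)]
  · rw [if_neg hc, if_neg hc, if_neg (fun h => hc h.1), zero_mul]
    ring

/-- The count discrepancy is at most 2. -/
lemma count_abs (hg : HerdedGibbs N hN π) (hπ0 : ∀ x, 0 ≤ π x) {m : ℕ} (hm : m < N)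
    (τ T : ℕ) (y : GState N) :
    |(empDen hN hg.X τ T (m + 1) y : ℝ) * condProb π ⟨m, hm⟩ y true
        - (empNum hN hg.X τ T (m + 1) y true : ℝ)| ≤ 2 := by
  rw [count_telescope hg hm τ T y]
  set i : Fin N := ⟨m, hm⟩
  set c : ℝ := hg.W 0 i y - hg.W 0 i (Function.update y i (!y i)) with hc
  have hagree : ∀ j, j ≠ i → Function.update y i (!y i) j = y j := fun j hj =>
    Function.update_of_ne hj _ _
  have hcp : condProb π i (Function.update y i (!y i)) true = condProb π i y true :=
    condProb_congr hagree true
  have hcb : -1 < c ∧ c < 1 := by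
    have h1 := hg.init_w i y
    have h2 := hg.init_w i (Function.update y i (!y i))
    rw [hcp] at h2
    constructor <;> [skip; skip] <;> simp only [hc] <;> linarith [h1.1, h1.2, h2.1, h2.2]
  have hmm : max c 0 - min c 0 < 1 := by
    rcases le_total c 0 with h | h
    · rw [max_eq_right h, min_eq_left h]; linarith [hcb.1]
    · rw [max_eq_left h, min_eq_right h]; linarith [hcb.2]
  have hb1 := weight_bounds hg hπ0 ((τ + T) * N + m) i y
  have hb2 := weight_bounds hg hπ0 (τ * N + m) i y
  rw [← hc] at hb1 hb2
  rw [abs_le]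
  constructor <;> linarith [hb1.1, hb1.2, hb2.1, hb2.2]

lemma empDen_split (hg : HerdedGibbs N hN π) {m : ℕ} (hm : m < N) (τ T : ℕ)
    (y : GState N) :
    (empDen hN hg.X τ T (m + 1) y : ℝ)
      = (empNum hN hg.X τ T (m + 1) y true : ℝ)
        + (empNum hN hg.X τ T (m + 1) y false : ℝ) := by
  rw [empDen_cast hg hm τ T y, empNum_true_cast hg hm τ T y]
  have hfalse : (empNum hN hg.X τ T (m + 1) y false : ℝ)
      = ∑ k ∈ Finset.Ico τ (τ + T),
          (if ((∀ j, j ≠ (⟨m, hm⟩ : Fin N) → hg.X (k * N + m) j = y j)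
              ∧ hg.X (k * N + m + 1) ⟨m, hm⟩ = false) then (1:ℝ) else 0) := by
    unfold empNum
    rw [Finset.sum_boole]
    apply congrArg
    apply congrArg
    apply Finset.filter_congr
    intro k _
    rw [scanVar_eq' (hN := hN) hm]
    rw [show k * N + (m + 1) = k * N + m + 1 from rfl]
    constructor
    · rintro ⟨h1, h2⟩
      exact ⟨(class_iff hg hm k y).mpr h1, h2⟩
    · rintro ⟨h1, h2⟩
      exact ⟨(class_iff hg hm k y).mp h1, h2⟩
  rw [hfalse, ← Finset.sum_add_distrib]
  apply Finset.sum_congr rfl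
  intro k _
  by_cases hc : ∀ j, j ≠ (⟨m, hm⟩ : Fin N) → hg.X (k * N + m) j = y j
  · rw [if_pos hc]
    by_cases hb : hg.X (k * N + m + 1) ⟨m, hm⟩ = true
    · rw [if_pos ⟨hc, hb⟩, if_neg (fun h => by rw [hb] at h; simp at h)]
      ring
    · have hb' : hg.X (k * N + m + 1) ⟨m, hm⟩ = false := by
        revert hb; cases hg.X (k * N + m + 1) ⟨m, hm⟩ <;> simp
      rw [if_neg (fun h => hb h.2), if_pos ⟨hc, hb'⟩]
      ring
  · rw [if_neg hc, if_neg (fun h => hc h.1), if_neg (fun h => hc h.1)]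
    ring

end Counts2
section Master

variable {N : ℕ} {hN : 0 < N} {π : GState N → ℝ}

/-- Master per-state bound on the count discrepancy. -/
lemma master_bound (hg : HerdedGibbs N hN π) (hπ0 : ∀ x, 0 ≤ π x) {m : ℕ} (hm : m < N)
    (τ T : ℕ) (y : GState N) (l B : ℝ) (hl : 0 < l) (hB : 0 < B)
    (hTpos : 0 < (T : ℝ)) (hBT : 2 * B / l ≤ (T : ℝ))
    (hden : ∀ b : Bool, 0 < π (Function.update y ⟨m, hm⟩ b) →
      l * T - B ≤ (empNum hN hg.X τ T (m + 1) y b : ℝ)) :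
    |(empNum hN hg.X τ T (m + 1) y (y ⟨m, hm⟩) : ℝ)
        - (empDen hN hg.X τ T (m + 1) y : ℝ) * condProb π ⟨m, hm⟩ y (y ⟨m, hm⟩)|
      ≤ 2 * (empDen hN hg.X τ T (m + 1) y : ℝ) / (l * T) := by
  set i : Fin N := ⟨m, hm⟩
  have hlT : 0 < l * T := by positivity
  have hBle : 2 * B ≤ l * T := by
    rw [div_le_iff₀ hl] at hBT
    linarith
  have hsplit := empDen_split hg hm τ T y
  have habs := count_abs hg hπ0 hm τ T y
  have hDen0 : (0:ℝ) ≤ (empDen hN hg.X τ T (m + 1) y : ℝ) := Nat.cast_nonneg _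
  rcases lt_or_eq_of_le (hπ0 (Function.update y i true)) with hptpos | hptzero
  · rcases lt_or_eq_of_le (hπ0 (Function.update y i false)) with hpfpos | hpfzero
    · -- both flips have positive probability
      have hNt := hden true hptpos
      have hNf := hden false hpfpos
      have hDen : l * T ≤ (empDen hN hg.X τ T (m + 1) y : ℝ) := by
        rw [hsplit]; linarith
      have h2 : (2:ℝ) ≤ 2 * (empDen hN hg.X τ T (m + 1) y : ℝ) / (l * T) := by
        rw [le_div_iff₀ hlT]; linarith
      have hD : π (Function.update y i true) + π (Function.update y i false) ≠ 0 := by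
        have : 0 < π (Function.update y i true) + π (Function.update y i false) := by
          linarith
        exact this.ne'
      have hcpf : condProb π i y false = 1 - condProb π i y true := by
        unfold condProb
        field_simp
        ring
      refine le_trans ?_ h2
      cases hb : y i
      · rw [hcpf]
        have heq : (empNum hN hg.X τ T (m + 1) y false : ℝ)
              - (empDen hN hg.X τ T (m + 1) y : ℝ) * (1 - condProb π i y true)
            = (empDen hN hg.X τ T (m + 1) y : ℝ) * condProb π i y true
              - (empNum hN hg.X τ T (m + 1) y true : ℝ) := by
          rw [hsplit]; ring
        rw [heq]
        exact habs
      · rw [abs_sub_comm]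
        exact habs
    · -- pt > 0, pf = 0
      have hNf0 : empNum hN hg.X τ T (m + 1) y false = 0 :=
        empNum_zero_of_pi_zero hg hπ0 hm τ T y false hpfzero.symm
      have hcpf : condProb π i y false = 0 := by
        unfold condProb
        rw [← hpfzero, zero_div]
      have hcpt : condProb π i y true = 1 := by
        unfold condProb
        rw [← hpfzero, add_zero, div_self hptpos.ne']
      have hDenNt : (empDen hN hg.X τ T (m + 1) y : ℝ)
          = (empNum hN hg.X τ T (m + 1) y true : ℝ) := by
        rw [hsplit, hNf0]; push_cast; ring
      cases hb : y i
      · rw [hcpf, hNf0, mul_zero, Nat.cast_zero, sub_zero, abs_zero]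
        positivity
      · rw [hcpt, hDenNt, mul_one, sub_self, abs_zero]
        positivity
  · -- pt = 0
    have hNt0 : empNum hN hg.X τ T (m + 1) y true = 0 :=
      empNum_zero_of_pi_zero hg hπ0 hm τ T y true hptzero.symm
    have hcpt : condProb π i y true = 0 := by
      unfold condProb
      rw [← hptzero, zero_div]
    rcases lt_or_eq_of_le (hπ0 (Function.update y i false)) with hpfpos | hpfzero
    · -- pt = 0 < pf
      have hcpf : condProb π i y false = 1 := by
        unfold condProb
        rw [← hptzero, zero_add, div_self hpfpos.ne']
      have hDenNf : (empDen hN hg.X τ T (m + 1) y : ℝ)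
          = (empNum hN hg.X τ T (m + 1) y false : ℝ) := by
        rw [hsplit, hNt0]; push_cast; ring
      cases hb : y i
      · rw [hcpf, hDenNf, mul_one, sub_self, abs_zero]
        positivity
      · rw [hcpt, hNt0, mul_zero, Nat.cast_zero, sub_zero, abs_zero]
        positivity
    · -- pt = 0, pf = 0
      have hNf0 : empNum hN hg.X τ T (m + 1) y false = 0 :=
        empNum_zero_of_pi_zero hg hπ0 hm τ T y false hpfzero.symm
      have hDen00 : (empDen hN hg.X τ T (m + 1) y : ℝ) = 0 := by
        rw [hsplit, hNt0, hNf0]; push_cast; ring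
      rw [hDen00, zero_mul, sub_zero]
      cases hb : y i
      · rw [hNf0, Nat.cast_zero, abs_zero]
        positivity
      · rw [hNt0, Nat.cast_zero, abs_zero]
        positivity

end Master
/-- Empirical distribution of samples at substep `m` of sweeps τ,…,τ+T−1. -/
noncomputable def subDist {N : ℕ} (X : ℕ → GState N) (τ T m : ℕ) : GState N → ℝ :=
  fun y => (((Finset.Ico τ (τ + T)).filter fun k => X (k * N + m) = y).card : ℝ) / T

section Dist

variable {N : ℕ} {hN : 0 < N} {π : GState N → ℝ}

lemma subDist_zero (X : ℕ → GState N) (τ T : ℕ) :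
    subDist X τ T 0 = empDist X τ T := by
  funext y
  unfold subDist empDist
  norm_num

lemma subDist_top (X : ℕ → GState N) (τ T : ℕ) :
    subDist X τ T N = empDist X (τ + 1) T := by
  funext y
  unfold subDist empDist
  congr 1
  norm_cast
  apply Finset.card_bij' (fun (k : ℕ) _ => k + 1) (fun (k : ℕ) _ => k - 1)
  · intro k hk
    simp only [Finset.mem_filter, Finset.mem_Ico] at hk ⊢
    refine ⟨⟨by omega, by omega⟩, ?_⟩
    rw [show (k + 1) * N = k * N + N by ring]
    exact hk.2
  · intro k hk
    simp only [Finset.mem_filter, Finset.mem_Ico] at hk ⊢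
    refine ⟨⟨by omega, by omega⟩, ?_⟩
    rw [show (k - 1) * N + N = k * N by
      have : 1 ≤ k := by omega
      cases k with
      | zero => omega
      | succ k => rw [Nat.succ_sub_one]; ring]
    exact hk.2
  · intro k hk; rfl
  · intro k hk
    simp only [Finset.mem_filter, Finset.mem_Ico] at hk
    omega

lemma subDist_succ (hg : HerdedGibbs N hN π) {m : ℕ} (hm : m < N) (τ T : ℕ)
    (y : GState N) :
    subDist hg.X τ T (m + 1) y
      = (empNum hN hg.X τ T (m + 1) y (y ⟨m, hm⟩) : ℝ) / T := by
  unfold subDist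
  rw [empNum_eq_card hg hm τ T y (y ⟨m, hm⟩), eq_update_self]
  congr 2

lemma subDist_nonneg (X : ℕ → GState N) (τ T m : ℕ) (y : GState N) :
    0 ≤ subDist X τ T m y := by
  unfold subDist; positivity

/-- Row of the Gibbs step kernel applied to a substep empirical distribution. -/
lemma vecMul_subDist_stepKernel (hg : HerdedGibbs N hN π) {m : ℕ} (hm : m < N)
    (τ T : ℕ) (y : GState N) :
    Matrix.vecMul (subDist hg.X τ T m) (stepKernel π ⟨m, hm⟩) y
      = ((empDen hN hg.X τ T (m + 1) y : ℝ) / T) * condProb π ⟨m, hm⟩ y (y ⟨m, hm⟩) := by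
  classical
  set i : Fin N := ⟨m, hm⟩
  have hne : Function.update y i true ≠ Function.update y i false := by
    intro h
    have := congrFun h i
    simp at this
  have hzero : ∀ x : GState N,
      x ∉ ({Function.update y i true, Function.update y i false} : Finset (GState N)) →
      subDist hg.X τ T m x * stepKernel π i x y = 0 := by
    intro x hx
    have hmem : ∀ b : Bool, Function.update y i b
        ∈ ({Function.update y i true, Function.update y i false} : Finset (GState N)) := by
      intro b; cases b <;> simp
    have hnc : ¬(∀ j, j ≠ i → x j = y j) := by
      intro hc
      rcases mem_class (fun j hj => hc j hj) with h | h
      · exact hx (h ▸ hmem (y i))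
      · exact hx (h ▸ hmem (!y i))
    unfold stepKernel
    rw [if_neg hnc, mul_zero]
  have hsum : Matrix.vecMul (subDist hg.X τ T m) (stepKernel π i) y
      = ∑ x ∈ ({Function.update y i true, Function.update y i false} : Finset (GState N)),
          subDist hg.X τ T m x * stepKernel π i x y := by
    rw [Matrix.vecMul, dotProduct]
    symm
    apply Finset.sum_subset (Finset.subset_univ _)
    intro x _ hx
    exact hzero x hx
  rw [hsum, Finset.sum_pair hne]
  have hterm : ∀ b : Bool, subDist hg.X τ T m (Function.update y i b)
        * stepKernel π i (Function.update y i b) y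
      = subDist hg.X τ T m (Function.update y i b) * condProb π i y (y i) := by
    intro b
    unfold stepKernel
    rw [if_pos (fun j hj => Function.update_of_ne hj _ _),
      condProb_congr (fun j hj => Function.update_of_ne hj _ _) (y i)]
  rw [hterm true, hterm false, ← add_mul]
  congr 1
  -- sum of the two point masses equals Den / T
  unfold subDist
  rw [← add_div]
  congr 1
  rw [empDen_cast hg hm τ T y, ← Nat.cast_add]
  rw [← Finset.card_union_of_disjoint]
  · rw [Finset.sum_boole]
    congr 1
    norm_cast
    congr 1
    ext k
    simp only [Finset.mem_union, Finset.mem_filter, Finset.mem_Ico]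
    constructor
    · rintro (⟨hk, heq⟩ | ⟨hk, heq⟩) <;>
        exact ⟨hk, fun j hj => by rw [heq]; exact Function.update_of_ne hj _ _⟩
    · rintro ⟨hk, hcls⟩
      have hXeq : hg.X (k * N + m) = Function.update y i (hg.X (k * N + m) i) := by
        funext j
        rcases eq_or_ne j i with rfl | hj
        · simp
        · rw [Function.update_of_ne hj]; exact hcls j hj
      cases hb : hg.X (k * N + m) i
      · right; exact ⟨hk, by rw [hXeq, hb]⟩
      · left; exact ⟨hk, by rw [hXeq, hb]⟩
  · rw [Finset.disjoint_left]
    intro k hk1 hk2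
    simp only [Finset.mem_filter] at hk1 hk2
    exact hne (by rw [← hk1.2, hk2.2])

end Dist
section Final

variable {N : ℕ} {hN : 0 < N} {π : GState N → ℝ}

lemma den_total (hg : HerdedGibbs N hN π) {m : ℕ} (hm : m < N) (τ T : ℕ) :
    ∑ y : GState N, (empDen hN hg.X τ T (m + 1) y : ℝ) = 2 * T := by
  classical
  set i : Fin N := ⟨m, hm⟩
  have h1 : ∀ y : GState N, (empDen hN hg.X τ T (m + 1) y : ℝ)
      = ∑ k ∈ Finset.Ico τ (τ + T),
          (if (∀ j, j ≠ i → hg.X (k * N + m) j = y j) then (1:ℝ) else 0) :=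
    fun y => empDen_cast hg hm τ T y
  rw [Finset.sum_congr rfl fun y _ => h1 y, Finset.sum_comm]
  have h2 : ∀ k : ℕ, ∑ y : GState N,
      (if (∀ j, j ≠ i → hg.X (k * N + m) j = y j) then (1:ℝ) else 0) = 2 := by
    intro k
    set z : GState N := hg.X (k * N + m) with hz
    have hne : Function.update z i true ≠ Function.update z i false := by
      intro h
      have := congrFun h i
      simp at this
    have hset : (Finset.univ.filter fun y : GState N => ∀ j, j ≠ i → z j = y j)
        = {Function.update z i true, Function.update z i false} := by
      ext y
      simp only [Finset.mem_filter, Finset.mem_univ, true_and, Finset.mem_insert,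
        Finset.mem_singleton]
      constructor
      · intro hcl
        have hyeq : y = Function.update z i (y i) := by
          funext j
          rcases eq_or_ne j i with rfl | hj
          · simp
          · rw [Function.update_of_ne hj]; exact (hcl j hj).symm
        cases hb : y i
        · right; rw [hyeq, hb]
        · left; rw [hyeq, hb]
      · rintro (rfl | rfl) <;> exact fun j hj => (Function.update_of_ne hj _ _).symm
    rw [Finset.sum_boole, hset, Finset.card_pair hne]
    norm_num
  rw [Finset.sum_congr rfl fun k _ => h2 k, Finset.sum_const, Nat.card_Ico]
  simp
  ring

/-- Per-substep total variation bound. -/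
lemma step_tv (hg : HerdedGibbs N hN π) (hπ0 : ∀ x, 0 ≤ π x) {m : ℕ} (hm : m < N)
    (τ T : ℕ) (l B : ℝ) (hl : 0 < l) (hB : 0 < B)
    (hTpos : 0 < (T : ℝ)) (hBT : 2 * B / l ≤ (T : ℝ))
    (hden : ∀ (y : GState N) (b : Bool), 0 < π (Function.update y ⟨m, hm⟩ b) →
      l * T - B ≤ (empNum hN hg.X τ T (m + 1) y b : ℝ)) :
    tvDist (subDist hg.X τ T (m + 1))
        (Matrix.vecMul (subDist hg.X τ T m) (stepKernel π ⟨m, hm⟩))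
      ≤ 2 / (l * T) := by
  have hlT : 0 < l * T := by positivity
  have hy : ∀ y : GState N, |subDist hg.X τ T (m + 1) y
        - Matrix.vecMul (subDist hg.X τ T m) (stepKernel π ⟨m, hm⟩) y|
      ≤ (empDen hN hg.X τ T (m + 1) y : ℝ) * (2 / ((l * T) * T)) := by
    intro y
    rw [subDist_succ hg hm τ T y, vecMul_subDist_stepKernel hg hm τ T y]
    have he : (empNum hN hg.X τ T (m + 1) y (y ⟨m, hm⟩) : ℝ) / T
        - (empDen hN hg.X τ T (m + 1) y : ℝ) / T * condProb π ⟨m, hm⟩ y (y ⟨m, hm⟩)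
        = ((empNum hN hg.X τ T (m + 1) y (y ⟨m, hm⟩) : ℝ)
          - (empDen hN hg.X τ T (m + 1) y : ℝ) * condProb π ⟨m, hm⟩ y (y ⟨m, hm⟩)) / T := by
      ring
    rw [he, abs_div, abs_of_pos hTpos]
    have hmb := master_bound hg hπ0 hm τ T y l B hl hB hTpos hBT (hden y)
    have h3 : 2 * (empDen hN hg.X τ T (m + 1) y : ℝ) / (l * T) / T
        = (empDen hN hg.X τ T (m + 1) y : ℝ) * (2 / ((l * T) * T)) := by
      field_simp
    rw [← h3]
    exact (div_le_div_iff_of_pos_right hTpos).mpr hmb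
  unfold tvDist
  rw [div_le_iff₀ (by norm_num : (0:ℝ) < 2)]
  calc ∑ y, |subDist hg.X τ T (m + 1) y
        - Matrix.vecMul (subDist hg.X τ T m) (stepKernel π ⟨m, hm⟩) y|
      ≤ ∑ y : GState N, (empDen hN hg.X τ T (m + 1) y : ℝ) * (2 / ((l * T) * T)) :=
        Finset.sum_le_sum fun y _ => hy y
    _ = (2 * T) * (2 / ((l * T) * T)) := by
        rw [← Finset.sum_mul, den_total hg hm τ T]
    _ = 2 / (l * T) * 2 := by
        field_simp

lemma stepKernel_nonneg (hπ0 : ∀ x, 0 ≤ π x) (i : Fin N) (x y : GState N) :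
    0 ≤ stepKernel π i x y := by
  unfold stepKernel
  split
  · exact condProb_nonneg hπ0 i x _
  · exact le_refl 0

lemma stepKernel_rowsum (hπ0 : ∀ x, 0 ≤ π x) (i : Fin N) (x : GState N) :
    ∑ y, stepKernel π i x y ≤ 1 := by
  classical
  have hne : Function.update x i true ≠ Function.update x i false := by
    intro h
    have := congrFun h i
    simp at this
  have hmem : ∀ b : Bool, Function.update x i b
      ∈ ({Function.update x i true, Function.update x i false} : Finset (GState N)) := by
    intro b; cases b <;> simp
  have hzero : ∀ y : GState N,
      y ∉ ({Function.update x i true, Function.update x i false} : Finset (GState N)) →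
      stepKernel π i x y = 0 := by
    intro y hy
    unfold stepKernel
    rw [if_neg]
    intro hc
    have hcl : ∀ j, j ≠ i → y j = x j := fun j hj => (hc j hj).symm
    rcases mem_class hcl with h | h
    · exact hy (h ▸ hmem (x i))
    · exact hy (h ▸ hmem (!x i))
  have hsum : ∑ y, stepKernel π i x y
      = ∑ y ∈ ({Function.update x i true, Function.update x i false} : Finset (GState N)),
          stepKernel π i x y := by
    symm
    apply Finset.sum_subset (Finset.subset_univ _)
    intro y _ hy
    exact hzero y hy
  rw [hsum, Finset.sum_pair hne]
  have hterm : ∀ b : Bool, stepKernel π i x (Function.update x i b) = condProb π i x b := by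
    intro b
    unfold stepKernel
    rw [if_pos (fun j hj => (Function.update_of_ne hj _ _).symm), Function.update_self]
  rw [hterm true, hterm false]
  unfold condProb
  rw [← add_div]
  by_cases hD : π (Function.update x i true) + π (Function.update x i false) = 0
  · rw [hD, div_zero]; norm_num
  · rw [div_self hD]

lemma vecMul_pi_stepKernel (hπ0 : ∀ x, 0 ≤ π x) (i : Fin N) :
    Matrix.vecMul π (stepKernel π i) = π := by
  classical
  funext y
  have hne : Function.update y i true ≠ Function.update y i false := by
    intro h
    have := congrFun h i
    simp at this
  have hmem : ∀ b : Bool, Function.update y i b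
      ∈ ({Function.update y i true, Function.update y i false} : Finset (GState N)) := by
    intro b; cases b <;> simp
  have hzero : ∀ x : GState N,
      x ∉ ({Function.update y i true, Function.update y i false} : Finset (GState N)) →
      π x * stepKernel π i x y = 0 := by
    intro x hx
    unfold stepKernel
    rw [if_neg, mul_zero]
    intro hc
    rcases mem_class hc with h | h
    · exact hx (h ▸ hmem (y i))
    · exact hx (h ▸ hmem (!y i))
  have hsum : Matrix.vecMul π (stepKernel π i) y
      = ∑ x ∈ ({Function.update y i true, Function.update y i false} : Finset (GState N)),
          π x * stepKernel π i x y := by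
    rw [Matrix.vecMul, dotProduct]
    symm
    apply Finset.sum_subset (Finset.subset_univ _)
    intro x _ hx
    exact hzero x hx
  rw [hsum, Finset.sum_pair hne]
  have hterm : ∀ b : Bool, π (Function.update y i b) * stepKernel π i (Function.update y i b) y
      = π (Function.update y i b) * condProb π i y (y i) := by
    intro b
    unfold stepKernel
    rw [if_pos (fun j hj => Function.update_of_ne hj _ _),
      condProb_congr (fun j hj => Function.update_of_ne hj _ _) (y i)]
  rw [hterm true, hterm false, ← add_mul]
  unfold condProb
  rw [eq_update_self]
  by_cases hD : π (Function.update y i true) + π (Function.update y i false) = 0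
  · rw [hD, div_zero, mul_zero]
    have hy1 : π y = π (Function.update y i (y i)) := by rw [eq_update_self]
    have h1 := hπ0 (Function.update y i true)
    have h2 := hπ0 (Function.update y i false)
    cases hb : y i
    · rw [hy1, hb]; linarith
    · rw [hy1, hb]; linarith
  · rw [mul_comm]; exact div_mul_cancel₀ _ hD

lemma vecMul_prod_fixed {α : Type*} [Fintype α] [DecidableEq α] (v : α → ℝ)
    (L : List (Matrix α α ℝ)) (h : ∀ K ∈ L, Matrix.vecMul v K = v) :
    Matrix.vecMul v L.prod = v := by
  induction L with
  | nil => rw [List.prod_nil, Matrix.vecMul_one]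
  | cons K L ih =>
    rw [List.prod_cons, ← Matrix.vecMul_vecMul, h K (List.mem_cons_self)]
    exact ih fun K' hK' => h K' (List.mem_cons_of_mem K hK')

lemma vecMul_pi_sweep (hπ0 : ∀ x, 0 ≤ π x) :
    Matrix.vecMul π (sweepKernel π) = π := by
  unfold sweepKernel
  apply vecMul_prod_fixed
  intro K hK
  rw [List.mem_ofFn] at hK
  obtain ⟨i, rfl⟩ := hK
  exact vecMul_pi_stepKernel hπ0 i

end Final
section Final2

variable {N : ℕ} {hN : 0 < N} {π : GState N → ℝ}

lemma sweep_approx (hg : HerdedGibbs N hN π) (hπ0 : ∀ x, 0 ≤ π x) (τ T : ℕ)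
    (l B : ℝ) (hl : 0 < l) (hB : 0 < B) (hTpos : 0 < (T : ℝ)) (hBT : 2 * B / l ≤ (T : ℝ))
    (hden : ∀ (m : ℕ) (hm : m < N) (y : GState N) (b : Bool),
      0 < π (Function.update y ⟨m, hm⟩ b) →
      l * T - B ≤ (empNum hN hg.X τ T (m + 1) y b : ℝ)) :
    tvDist (empDist hg.X (τ + 1) T)
        (Matrix.vecMul (empDist hg.X τ T) (sweepKernel π))
      ≤ (N : ℝ) * (2 / (l * T)) := by
  classical
  set L : List (Matrix (GState N) (GState N) ℝ) := List.ofFn fun i : Fin N => stepKernel π i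
    with hL
  have aux : ∀ m : ℕ, m ≤ N →
      tvDist (subDist hg.X τ T m)
          (Matrix.vecMul (subDist hg.X τ T 0) ((L.take m).prod))
        ≤ (m : ℝ) * (2 / (l * T)) := by
    intro m
    induction m with
    | zero =>
      intro _
      rw [List.take_zero, List.prod_nil, Matrix.vecMul_one]
      simp [tvDist]
    | succ m ih =>
      intro hmn
      have hm : m < N := hmn
      have hlen : m < L.length := by rw [hL, List.length_ofFn]; exact hm
      have hget : L[m] = stepKernel π ⟨m, hm⟩ := by
        simp [hL]
      rw [List.prod_take_succ L m hlen, hget, ← Matrix.vecMul_vecMul]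
      refine le_trans (tvDist_triangle _
        (Matrix.vecMul (subDist hg.X τ T m) (stepKernel π ⟨m, hm⟩)) _) ?_
      have h1 := step_tv hg hπ0 hm τ T l B hl hB hTpos hBT (fun y b => hden m hm y b)
      have h2 := tvDist_vecMul_le (stepKernel π ⟨m, hm⟩)
        (stepKernel_nonneg hπ0 ⟨m, hm⟩) (stepKernel_rowsum hπ0 ⟨m, hm⟩)
        (subDist hg.X τ T m) (Matrix.vecMul (subDist hg.X τ T 0) ((L.take m).prod))
      have h3 := ih (by omega)
      push_cast
      linarith
  have hNfin := aux N le_rfl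
  have hlenN : L.length = N := by rw [hL, List.length_ofFn]
  have htake : L.take N = L := List.take_of_length_le (by rw [hlenN])
  rw [htake, subDist_zero, subDist_top] at hNfin
  exact hNfin

lemma empDist_mass (X : ℕ → GState N) (τ T : ℕ) (hTpos : 0 < (T : ℝ)) :
    ∑ y, empDist X τ T y = 1 := by
  classical
  unfold empDist
  rw [← Finset.sum_div]
  have hcard : ∑ y : GState N,
      ((((Finset.Ico τ (τ + T)).filter fun k => X (k * N) = y).card : ℕ) : ℝ) = (T : ℝ) := by
    rw [← Nat.cast_sum]
    have h := Finset.card_eq_sum_card_fiberwise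
      (f := fun k => X (k * N)) (s := Finset.Ico τ (τ + T)) (t := Finset.univ)
      (fun x _ => Finset.mem_univ _)
    rw [← h, Nat.card_Ico]
    congr 1
    omega
  rw [hcard]
  exact div_self hTpos.ne'

end Final2

/-- Recursive distance inequality: with d_τ the total variation distance
of the herded Gibbs empirical distribution at sweep τ from the target π, linear visiting
rate constants l, B, Dobrushin coefficient η := dobrushin(𝒯) < 1 of the Gibbs sweep
kernel, and T ≥ T* := 2B/l, one has d_{τ+1} ≤ 2N/(lT) + η·d_τ. -/
theorem herded_gibbs_recursive_distance {N : ℕ} (hN : 0 < N)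
    (π : GState N → ℝ) (hπ0 : ∀ x, 0 ≤ π x) (hπ1 : ∑ x, π x = 1)
    (hg : HerdedGibbs N hN π)
    (l B : ℝ) (hl : 0 < l) (hB : 0 < B)
    (hrate : ∀ i : ℕ, 1 ≤ i → i ≤ N → ∀ x : GState N, 0 < π x → ∀ T s : ℕ,
      l * (T : ℝ) - B
        ≤ (((Finset.Ico s (s + T)).filter fun k => hg.X (k * N + i) = x).card : ℝ))
    (hη : dobrushin (sweepKernel π) < 1)
    (τ T : ℕ) (hT : 2 * B / l ≤ (T : ℝ)) :
    tvDist (empDist hg.X (τ + 1) T) π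
      ≤ 2 * (N : ℝ) / (l * T) + dobrushin (sweepKernel π) * tvDist (empDist hg.X τ T) π := by
  have hTpos : 0 < (T : ℝ) := lt_of_lt_of_le (by positivity) hT
  have hden : ∀ (m : ℕ) (hm : m < N) (y : GState N) (b : Bool),
      0 < π (Function.update y ⟨m, hm⟩ b) →
      l * T - B ≤ (empNum hN hg.X τ T (m + 1) y b : ℝ) := by
    intro m hm y b hpos
    have h := hrate (m + 1) (by omega) (by omega) (Function.update y ⟨m, hm⟩ b) hpos T τ
    rw [empNum_eq_card hg hm τ T y b]
    exact h
  have happrox := sweep_approx hg hπ0 τ T l B hl hB hTpos hT hden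
  have hmass : ∑ x, empDist hg.X τ T x = 1 := empDist_mass hg.X τ T hTpos
  have hdob := tvDist_vecMul_le_dobrushin (sweepKernel π) (empDist hg.X τ T) π
    (by rw [hmass, hπ1])
  rw [vecMul_pi_sweep hπ0] at hdob
  have harith : (N : ℝ) * (2 / (l * T)) = 2 * (N : ℝ) / (l * T) := by ring
  calc tvDist (empDist hg.X (τ + 1) T) π
      ≤ tvDist (empDist hg.X (τ + 1) T)
          (Matrix.vecMul (empDist hg.X τ T) (sweepKernel π))
        + tvDist (Matrix.vecMul (empDist hg.X τ T) (sweepKernel π)) π :=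
        tvDist_triangle _ _ _
    _ ≤ 2 * (N : ℝ) / (l * T) + dobrushin (sweepKernel π) * tvDist (empDist hg.X τ T) π :=
        add_le_add (le_trans happrox (le_of_eq harith)) hdob
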